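/- The rational functions x,y,z,p,q,r of Theorem 2 satisfy the linear system y=u(p-x), u(y+1)=p+x+1, z=v(q-y), v(z+1)=q+y+1, x=w(r-z), w(x+1)=r+z+1, for all rationals u,v,w with (1-u²)(v²-1)(w²-1)+8uvw ≠ 0 and u,v,w ≠ 0. -/

import Mathlib

theorem stmt_9 (u v w : ℚ) (hu : u ≠ 0) (hv : v ≠ 0) (hw : w ≠ 0)
    (D : ℚ) (hD : D = (1 - u^2) * (v^2 - 1) * (w^2 - 1) + 8*u*v*w) (hD0 : D ≠ 0)
    (x y z p q r : ℚ)
    (hx : x = (u-1)*w*(1+u-2*v+2*u*v+v^2+u*v^2+(-1-u+v^2+u*v^2)*w) / D)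
    (hy : y = u*(v-1)*(1-u+v-u*v+(-2+2*v)*w+(1+u+v+u*v)*w^2) / D)
    (hz : z = v*(w-1)*(1-2*u+u^2-v+u^2*v+(1+2*u+u^2-v+u^2*v)*w) / D)
    (hp : p = (u*x + y) / u) (hq : q = (v*y + z) / v) (hr : r = (w*z + x) / w) :
    y = u * (p - x) ∧ u * (y + 1) = p + x + 1 ∧
    z = v * (q - y) ∧ v * (z + 1) = q + y + 1 ∧
    x = w * (r - z) ∧ w * (x + 1) = r + z + 1 := by
  subst hx hy hz hp hq hr
  refine ⟨by field_simp; ring, ?_, by field_simp; ring, ?_, by field_simp; ring, ?_⟩ <;>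
    field_simp <;> (subst hD; ring)
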